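/- Let G be an infinite torsion subgroup of 𝕋 (every element of G has finite order). Then there exists an arithmetic sequence (a_n) such that G = ⋃_{n≥1} {x ∈ 𝕋 : a_n·x = 0}; that is, G is the increasing union of the (unique) finite cyclic subgroups of 𝕋 of orders a_1 | a_2 | a_3 | ⋯. -/

import Mathlib

open Filter Topology

noncomputable section

/-- The circle group `𝕋 = ℝ/ℤ`. -/
abbrev Circle1 : Type := AddCircle (1 : ℝ)

/-- An arithmetic sequence `(a_n)_{n ≥ 1}`, with the convention `a 0 = 1`:
a strictly increasing sequence of positive integers with `1 < a 1` and `a n ∣ a (n+1)`. -/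
def IsArithSeq (a : ℕ → ℕ) : Prop :=
  a 0 = 1 ∧ StrictMono a ∧ ∀ n, a n ∣ a (n + 1)

/-- The ratio sequence: `q n = a n / a (n-1)` (so `q 1 = a 1`). -/
def ratioSeq (a : ℕ → ℕ) (n : ℕ) : ℕ := a n / a (n - 1)

/-- The subgroup of `𝕋` characterized by a sequence of integers `(u n)`. -/
def charSub (u : ℕ → ℕ) : Set Circle1 :=
  {x : Circle1 | Tendsto (fun n => (u n) • x) atTop (nhds 0)}

/-- The set `{r·a_{k-1} : k ≥ 1, 1 ≤ r ≤ q_k - 1}` whose increasing enumeration is `(d_n)`. -/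
def DSet (a : ℕ → ℕ) : Set ℕ :=
  {m | ∃ k, 1 ≤ k ∧ ∃ r, 1 ≤ r ∧ r ≤ ratioSeq a k - 1 ∧ m = r * a (k - 1)}

/-- `(d_n)` is the strictly increasing enumeration of `DSet a`. -/
def IsDSeq (a d : ℕ → ℕ) : Prop := StrictMono d ∧ Set.range d = DSet a

/-- An arithmetic-type sequence associated with the arithmetic sequence `(a_n)`:
a strictly increasing sequence of positive integers whose set of values contains all the
values `a k` (for `k ≥ 1`) and is contained in `DSet a`. -/
def IsArithTypeSeq (a e : ℕ → ℕ) : Prop :=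
  StrictMono e ∧ (∀ k, 1 ≤ k → a k ∈ Set.range e) ∧ Set.range e ⊆ DSet a

/-- `(c_n)_{n ≥ 1}` is the canonical representation of `x ∈ 𝕋` w.r.t. the arithmetic
sequence `(a_n)`: `0 ≤ c n ≤ q n - 1` for all `n ≥ 1`, `c n < q n - 1` infinitely often,
and `x = Σ_{n ≥ 1} c n / a n` in `𝕋`. -/
def IsCanonicalRep (a c : ℕ → ℕ) (x : Circle1) : Prop :=
  (∀ n, 1 ≤ n → c n ≤ ratioSeq a n - 1) ∧
  {n | 1 ≤ n ∧ c n < ratioSeq a n - 1}.Infinite ∧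
  x = ((∑' n : ℕ, (c (n + 1) : ℝ) / (a (n + 1) : ℝ) : ℝ) : Circle1)

/-- The support of a digit sequence: `supp(x) = {n ≥ 1 : c n ≠ 0}`. -/
def suppOf (c : ℕ → ℕ) : Set ℕ := {n | 1 ≤ n ∧ c n ≠ 0}

lemma gen_smul_zero {m : ℕ} (hm : 0 < m) : m • (((1:ℝ)/m : ℝ) : Circle1) = 0 := by
  rw [← AddCircle.coe_nsmul]
  have : (m:ℕ) • ((1:ℝ)/m) = 1 := by
    rw [nsmul_eq_mul]
    field_simp
  rw [this]
  exact (AddCircle.coe_period (p := (1:ℝ)))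

lemma nsmul_zero_iff {m : ℕ} (hm : 0 < m) (y : Circle1) :
    m • y = 0 ↔ ∃ n : ℤ, y = n • (((1:ℝ)/m : ℝ) : Circle1) := by
  constructor
  · intro h
    obtain ⟨x, rfl⟩ := QuotientAddGroup.mk_surjective y
    rw [show ((x : Circle1)) = ((x:ℝ) : Circle1) from rfl] at *
    rw [← AddCircle.coe_nsmul, AddCircle.coe_eq_zero_iff] at h
    obtain ⟨n, hn⟩ := h
    refine ⟨n, ?_⟩
    rw [← AddCircle.coe_zsmul]
    congr 1
    rw [zsmul_eq_mul, nsmul_eq_mul] at *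
    have hm' : (m:ℝ) ≠ 0 := Nat.cast_ne_zero.2 hm.ne'
    field_simp at hn ⊢
    linarith [hn]
  · rintro ⟨n, rfl⟩
    rw [smul_comm]
    rw [gen_smul_zero hm, smul_zero]

lemma gen_mem (G : AddSubgroup Circle1) {x : Circle1} (hx : x ∈ G) (hfin : IsOfFinAddOrder x) :
    (((1:ℝ)/(addOrderOf x) : ℝ) : Circle1) ∈ G := by
  set m := addOrderOf x with hmdef
  have hm : 0 < m := hfin.addOrderOf_pos
  set g : Circle1 := (((1:ℝ)/m : ℝ) : Circle1) with hg
  have hmx : m • x = 0 := addOrderOf_nsmul_eq_zero x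
  obtain ⟨k, hk⟩ := (nsmul_zero_iff hm x).1 hmx
  have hmg : (m:ℤ) • g = 0 := by rw [natCast_zsmul]; exact gen_smul_zero hm
  -- gcd k m = 1
  set d : ℕ := Int.gcd k m with hd
  have hdm : d ∣ m := by
    have := Int.gcd_dvd_right (a := k) (b := (m:ℤ))
    exact_mod_cast this
  have hdk : (d:ℤ) ∣ k := Int.gcd_dvd_left k m
  obtain ⟨m', hm'⟩ := hdm
  have hd0 : 0 < d := by
    rcases Nat.eq_zero_or_pos d with h | h
    · exfalso; rw [h, zero_mul] at hm'; omega
    · exact h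
  have hm'pos : 0 < m' := by
    rcases Nat.eq_zero_or_pos m' with h | h
    · exfalso; rw [h, mul_zero] at hm'; omega
    · exact h
  obtain ⟨k', hk'⟩ := hdk
  have hsm : (m' : ℕ) • x = 0 := by
    rw [hk, ← natCast_zsmul, smul_smul, hk']
    have : (m' : ℤ) * ((d:ℤ) * k') = k' * (m:ℤ) := by
      push_cast [hm']; ring
    rw [this, ← smul_smul, hmg, smul_zero]
  have hmm' : m ∣ m' := addOrderOf_dvd_of_nsmul_eq_zero hsm
  have hd1 : d = 1 := by
    have := Nat.le_of_dvd hm'pos hmm'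
    nlinarith [hm', hd0, hm'pos]
  -- Bezout
  have hbez := Int.gcd_eq_gcd_ab k (m:ℤ)
  rw [← hd, hd1] at hbez
  have : g = (Int.gcdA k ↑m) • x := by
    rw [hk, smul_smul, ← one_zsmul g]
    nth_rewrite 1 [show (1:ℤ) = k * Int.gcdA k ↑m + ↑m * Int.gcdB k ↑m by exact_mod_cast hbez]
    rw [add_zsmul, mul_comm k, ← smul_smul (Int.gcdA k ↑m), mul_zsmul, smul_comm ((m:ℤ)) (Int.gcdB k ↑m) g, hmg, smul_zero, add_zero]
  rw [this]
  exact zsmul_mem hx _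

lemma gen_lcm_mem (G : AddSubgroup Circle1) {m n : ℕ} (hm : 0 < m) (hn : 0 < n)
    (hmg : (((1:ℝ)/m : ℝ) : Circle1) ∈ G) (hng : (((1:ℝ)/n : ℝ) : Circle1) ∈ G) :
    (((1:ℝ)/(Nat.lcm m n) : ℝ) : Circle1) ∈ G := by
  set a : ℤ := Int.gcdA (m:ℤ) (n:ℤ)
  set b : ℤ := Int.gcdB (m:ℤ) (n:ℤ)
  have hbez : (Nat.gcd m n : ℤ) = m * a + n * b := by
    have := Int.gcd_eq_gcd_ab (m:ℤ) (n:ℤ)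
    simpa using this
  have hkey : ((1:ℝ)/(Nat.lcm m n) : ℝ) = (a:ℝ) * (1/n) + (b:ℝ) * (1/m) + (0:ℤ) • 1 := by
    have hgl : (Nat.gcd m n) * (Nat.lcm m n) = m * n := Nat.gcd_mul_lcm m n
    have hL : (0:ℝ) < (Nat.lcm m n : ℝ) := by
      have := Nat.pos_of_ne_zero (Nat.lcm_ne_zero hm.ne' hn.ne')
      exact_mod_cast this
    have hm' : (m:ℝ) ≠ 0 := Nat.cast_ne_zero.2 hm.ne'
    have hn' : (n:ℝ) ≠ 0 := Nat.cast_ne_zero.2 hn.ne'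
    have hbezR : (Nat.gcd m n : ℝ) = m * a + n * b := by exact_mod_cast hbez
    have hglR : (Nat.gcd m n : ℝ) * (Nat.lcm m n : ℝ) = (m:ℝ) * n := by exact_mod_cast hgl
    rw [zero_smul, add_zero]
    field_simp
    nlinarith [hbezR, hglR]
  have : (((1:ℝ)/(Nat.lcm m n) : ℝ) : Circle1)
      = a • (((1:ℝ)/n : ℝ) : Circle1) + b • (((1:ℝ)/m : ℝ) : Circle1) := by
    rw [hkey]
    push_cast [AddCircle.coe_add, AddCircle.coe_zsmul]
    simp [zsmul_eq_mul]
  rw [this]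
  exact add_mem (zsmul_mem hng a) (zsmul_mem hmg b)

lemma torsion_finite {m : ℕ} (hm : 0 < m) : {y : Circle1 | m • y = 0}.Finite := by
  have hsub : {y : Circle1 | m • y = 0} ⊆
      Set.range (fun j : Fin m => ((j:ℕ):ℤ) • (((1:ℝ)/m : ℝ) : Circle1)) := by
    intro y hy
    obtain ⟨k, rfl⟩ := (nsmul_zero_iff hm y).1 hy
    have hmg : (m:ℤ) • (((1:ℝ)/m : ℝ) : Circle1) = 0 := by
      rw [natCast_zsmul]; exact gen_smul_zero hm
    set g : Circle1 := (((1:ℝ)/m : ℝ) : Circle1)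
    have hrlt : (k % m).toNat < m := by
      have h1 : 0 ≤ k % m := Int.emod_nonneg k (by exact_mod_cast hm.ne')
      have h2 : k % m < m := Int.emod_lt_of_pos k (by exact_mod_cast hm)
      omega
    refine ⟨⟨(k % m).toNat, hrlt⟩, ?_⟩
    show ((((k % m).toNat : ℕ)):ℤ) • g = k • g
    rw [Int.toNat_of_nonneg (Int.emod_nonneg k (by exact_mod_cast hm.ne'))]
    conv_rhs => rw [← Int.emod_add_mul_ediv k m]
    rw [add_zsmul, mul_comm, mul_zsmul, hmg, smul_zero, add_zero]
  exact Set.Finite.subset (Set.finite_range _) hsub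

/-- every infinite torsion subgroup of `𝕋` is the increasing union of the
finite cyclic subgroups `{x : a_n · x = 0}` for some arithmetic sequence `(a_n)`. -/
theorem torsion_subgroup_union_cyclic (G : AddSubgroup Circle1)
    (hGinf : (G : Set Circle1).Infinite) (hGtor : ∀ x ∈ G, IsOfFinAddOrder x) :
    ∃ a : ℕ → ℕ, IsArithSeq a ∧
      (G : Set Circle1) = ⋃ n ∈ {n : ℕ | 1 ≤ n}, {x : Circle1 | (a n) • x = 0} := by
  classical
  set p : ℕ → Prop := fun m => 0 < m ∧ (((1:ℝ)/m : ℝ) : Circle1) ∈ G with hp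
  -- torsion sets are inside G
  have hTsub : ∀ m, p m → {y : Circle1 | m • y = 0} ⊆ (G : Set Circle1) := by
    intro m hm y hy
    obtain ⟨k, rfl⟩ := (nsmul_zero_iff hm.1 y).1 hy
    exact zsmul_mem hm.2 k
  -- orders of elements of G satisfy p
  have hord : ∀ x ∈ G, p (addOrderOf x) := by
    intro x hx
    exact ⟨(hGtor x hx).addOrderOf_pos, gen_mem G hx (hGtor x hx)⟩
  -- p is infinite
  have hinf : (setOf p).Infinite := by
    intro hfin
    apply hGinf
    have hsub : (G : Set Circle1) ⊆ ⋃ m ∈ setOf p, {y : Circle1 | m • y = 0} := by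
      intro x hx
      exact Set.mem_biUnion (hord x hx) (addOrderOf_nsmul_eq_zero x)
    exact Set.Finite.subset (Set.Finite.biUnion hfin fun m hm => torsion_finite hm.1) hsub
  -- p closed under lcm
  have hlcm : ∀ m n, p m → p n → p (Nat.lcm m n) := by
    intro m n hm hn
    exact ⟨Nat.pos_of_ne_zero (Nat.lcm_ne_zero hm.1.ne' hn.1.ne'),
      gen_lcm_mem G hm.1 hn.1 hm.2 hn.2⟩
  have hone : p 1 := by
    refine ⟨one_pos, ?_⟩
    have : (((1:ℝ)/(1:ℕ) : ℝ) : Circle1) = 0 := by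
      norm_num
    rw [this]; exact zero_mem G
  -- choice of larger elements
  have hgt : ∀ c : ℕ, ∃ b, p b ∧ c < b := by
    intro c
    obtain ⟨b, hb, h⟩ := hinf.exists_gt c
    exact ⟨b, hb, h⟩
  choose bb hbbp hbbgt using hgt
  -- the sequence
  set a : ℕ → ℕ := fun n =>
    Nat.rec 1 (fun n an => Nat.lcm (Nat.lcm an (Nat.nth p n)) (bb an)) n with ha
  have hstep : ∀ n, a (n + 1) = Nat.lcm (Nat.lcm (a n) (Nat.nth p n)) (bb (a n)) := fun n => rfl
  have hamem : ∀ n, p (a n) := by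
    intro n
    induction n with
    | zero => exact hone
    | succ n ih =>
      rw [hstep]
      exact hlcm _ _ (hlcm _ _ ih (Nat.nth_mem_of_infinite hinf n)) (hbbp (a n))
  have hdvd : ∀ n, a n ∣ a (n + 1) := by
    intro n; rw [hstep]
    exact dvd_trans (Nat.dvd_lcm_left _ _) (Nat.dvd_lcm_left _ _)
  have hodvd : ∀ n, Nat.nth p n ∣ a (n + 1) := by
    intro n; rw [hstep]
    exact dvd_trans (Nat.dvd_lcm_right _ _) (Nat.dvd_lcm_left _ _)
  have hlt : ∀ n, a n < a (n + 1) := by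
    intro n
    have h1 : bb (a n) ∣ a (n + 1) := by rw [hstep]; exact Nat.dvd_lcm_right _ _
    have h2 : bb (a n) ≤ a (n + 1) := Nat.le_of_dvd (hamem (n+1)).1 h1
    exact lt_of_lt_of_le (hbbgt (a n)) h2
  refine ⟨a, ⟨rfl, strictMono_nat_of_lt_succ hlt, hdvd⟩, ?_⟩
  ext x
  simp only [Set.mem_iUnion, Set.mem_setOf_eq, SetLike.mem_coe]
  constructor
  · intro hx
    have hm : addOrderOf x ∈ setOf p := hord x hx
    change addOrderOf x ∈ Set.ofPred p at hm
    rw [← Nat.range_nth_of_infinite hinf] at hm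
    obtain ⟨k, hk⟩ := hm
    obtain ⟨c, hc⟩ : addOrderOf x ∣ a (k + 1) := hk ▸ hodvd k
    refine ⟨k + 1, Nat.succ_le_succ (Nat.zero_le k), ?_⟩
    have h0 : addOrderOf x • x = 0 := addOrderOf_nsmul_eq_zero x
    calc a (k+1) • x = c • (addOrderOf x • x) := by rw [hc, mul_comm, mul_nsmul, smul_comm (addOrderOf x) c x]
    _ = 0 := by rw [h0, smul_zero]
  · rintro ⟨n, -, hn⟩
    exact hTsub (a n) (hamem n) hn
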